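/- Let $\Sigma = [\sigma_{ij}]$ be the normalized covariance matrix of a Gaussian tree $G=(V,E,W)$ with $|w_e|<1$ for all edges. Then $\Sigma$ is invertible and the entries $u_{ij}$ of $\Sigma^{-1}$ satisfy: $u_{ij} = -w_{ij}/(1-w_{ij}^2)$ if $e_{ij}\in E$; $u_{ij}=0$ if $i\neq j$ and $e_{ij}\notin E$; and $u_{ii} = 1 + \sum_{p: e_{ip}\in E} w_{ip}^2/(1-w_{ip}^2)$. -/

import Mathlib

open Matrix

theorem stmt14 {N : ℕ} (G : SimpleGraph (Fin N)) [DecidableRel G.Adj]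
    (hT : G.IsTree) (w : Sym2 (Fin N) → ℝ)
    (hw : ∀ e ∈ G.edgeFinset, |w e| < 1)
    (S : Matrix (Fin N) (Fin N) ℝ)
    (hS : ∀ i j : Fin N, ∀ p : G.Walk i j, p.IsPath → S i j = (p.edges.map w).prod) :
    IsUnit S.det ∧
    (∀ i j : Fin N, G.Adj i j → S⁻¹ i j = -(w s(i, j)) / (1 - (w s(i, j)) ^ 2)) ∧
    (∀ i j : Fin N, i ≠ j → ¬ G.Adj i j → S⁻¹ i j = 0) ∧
    (∀ i : Fin N, S⁻¹ i i = 1 + ∑ p ∈ G.neighborFinset i, (w s(i, p)) ^ 2 / (1 - (w s(i, p)) ^ 2)) := by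
  classical
  have hfact : ∀ i j : Fin N, ∃ q : G.Walk i j, q.IsPath := by
    intro i j
    obtain ⟨p⟩ := hT.isConnected.preconnected i j
    exact ⟨p.toPath.1, p.toPath.2⟩
  have hsymm : ∀ i j : Fin N, S i j = S j i := by
    intro i j
    obtain ⟨q, hq⟩ := hfact i j
    rw [hS i j q hq, hS j i q.reverse hq.reverse, SimpleGraph.Walk.edges_reverse,
      List.map_reverse, List.prod_reverse]
  have hSii : ∀ i : Fin N, S i i = 1 := by
    intro i
    simpa using hS i i SimpleGraph.Walk.nil SimpleGraph.Walk.IsPath.nil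
  have hadjS : ∀ i j : Fin N, G.Adj i j → S i j = w s(i, j) := by
    intro i j h
    have := hS i j (SimpleGraph.Walk.cons h SimpleGraph.Walk.nil)
      (by simp [SimpleGraph.Walk.cons_isPath_iff, h.ne])
    simpa using this
  have hne : ∀ a b : Fin N, G.Adj a b → (1 : ℝ) - w s(a, b) ^ 2 ≠ 0 := by
    intro a b h
    have hm : s(a, b) ∈ G.edgeFinset := by
      simpa [SimpleGraph.mem_edgeFinset] using h
    have := hw _ hm
    have h1 : w s(a, b) ^ 2 < 1 := by
      nlinarith [abs_nonneg (w s(a, b)), sq_abs (w s(a, b))]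
    intro hc; nlinarith
  -- structural fact about paths towards j
  have hmain : ∀ i j : Fin N, i ≠ j → ∃ k0 : Fin N, G.Adj j k0 ∧
      S i j = S i k0 * w s(j, k0) ∧
      ∀ k, G.Adj j k → k ≠ k0 → S i k = S i j * w s(j, k) := by
    intro i j hij
    obtain ⟨r, hr⟩ := hfact j i
    have hnil : ¬ r.Nil := SimpleGraph.Walk.not_nil_of_ne (Ne.symm hij)
    obtain ⟨k0, hadj, q, hrq⟩ := SimpleGraph.Walk.not_nil_iff.mp hnil
    have hq : q.IsPath ∧ j ∉ q.support := by
      have h := hr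
      rw [hrq, SimpleGraph.Walk.cons_isPath_iff] at h
      exact h
    have hSij : S i j = S i k0 * w s(j, k0) := by
      have h1 : S j i = w s(j, k0) * S k0 i := by
        rw [hS j i r hr, hrq, SimpleGraph.Walk.edges_cons, List.map_cons, List.prod_cons,
          hS k0 i q hq.1]
      rw [hsymm i j, hsymm i k0, h1, mul_comm]
    refine ⟨k0, hadj, hSij, ?_⟩
    intro k hjk hkk0
    have hr' : r.IsPath := hr
    -- k is not on the path r
    have hknotin : k ∉ r.support := by
      intro hk
      have hkj : k ≠ j := (G.ne_of_adj hjk).symm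
      have htp : (r.takeUntil k hk).IsPath := hr'.takeUntil hk
      have hsingle : (SimpleGraph.Walk.cons hjk SimpleGraph.Walk.nil).IsPath := by
        simp [SimpleGraph.Walk.cons_isPath_iff, hjk.ne]
      have huniq := hT.IsAcyclic.path_unique ⟨r.takeUntil k hk, htp⟩
        ⟨SimpleGraph.Walk.cons hjk SimpleGraph.Walk.nil, hsingle⟩
      have hwalkeq : r.takeUntil k hk = SimpleGraph.Walk.cons hjk SimpleGraph.Walk.nil :=
        congrArg Subtype.val huniq
      have hr2 : r = SimpleGraph.Walk.cons hjk (r.dropUntil k hk) := by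
        conv_lhs => rw [← SimpleGraph.Walk.take_spec r hk]
        rw [hwalkeq]
        simp
      have h1 : r.getVert 1 = k := by
        rw [hr2]
        exact (SimpleGraph.Walk.getVert_cons_succ _ hjk).trans (SimpleGraph.Walk.getVert_zero _)
      have h2 : r.getVert 1 = k0 := by
        rw [hrq]
        exact (SimpleGraph.Walk.getVert_cons_succ _ hadj).trans (SimpleGraph.Walk.getVert_zero _)
      exact hkk0 (h1 ▸ h2 ▸ rfl)
    have hpk : (SimpleGraph.Walk.cons hjk.symm r).IsPath := by
      rw [SimpleGraph.Walk.cons_isPath_iff]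
      exact ⟨hr', hknotin⟩
    have h3 : S k i = w s(k, j) * S j i := by
      rw [hS k i (SimpleGraph.Walk.cons hjk.symm r) hpk, SimpleGraph.Walk.edges_cons,
        List.map_cons, List.prod_cons, hS j i r hr']
    rw [hsymm i k, h3, hsymm i j, Sym2.eq_swap, mul_comm, Sym2.eq_swap]
  -- the claimed inverse
  set U : Matrix (Fin N) (Fin N) ℝ := fun a b =>
    if a = b then 1 + ∑ p ∈ G.neighborFinset a, (w s(a, p)) ^ 2 / (1 - (w s(a, p)) ^ 2)
    else if G.Adj a b then -(w s(a, b)) / (1 - (w s(a, b)) ^ 2) else 0 with hU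
  have hsum : ∀ i j : Fin N, (S * U) i j
      = S i j * U j j + ∑ k ∈ G.neighborFinset j, S i k * U k j := by
    intro i j
    rw [Matrix.mul_apply]
    have hsub : insert j (G.neighborFinset j) ⊆ Finset.univ := Finset.subset_univ _
    rw [← Finset.sum_subset hsub]
    · rw [Finset.sum_insert (by simp)]
    · intro k _ hk
      simp only [Finset.mem_insert, SimpleGraph.mem_neighborFinset, not_or] at hk
      have h2 : ¬ G.Adj k j := fun h => hk.2 h.symm
      have : U k j = 0 := by simp [hU, hk.1, h2]
      rw [this, mul_zero]
  have key : S * U = 1 := by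
    ext i j
    rw [hsum]
    by_cases hij : i = j
    · subst hij
      rw [Matrix.one_apply_eq, hSii]
      have hterm : ∀ k ∈ G.neighborFinset i, S i k * U k i
          = -((w s(i, k)) ^ 2 / (1 - (w s(i, k)) ^ 2)) := by
        intro k hk
        rw [SimpleGraph.mem_neighborFinset] at hk
        have hUki : U k i = -(w s(k, i)) / (1 - (w s(k, i)) ^ 2) := by
          simp [hU, (G.ne_of_adj hk).symm, hk.symm]
        rw [hadjS i k hk, hUki, Sym2.eq_swap (a := k)]
        ring
      rw [Finset.sum_congr rfl hterm]
      have hUii : U i i = 1 + ∑ p ∈ G.neighborFinset i,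
          (w s(i, p)) ^ 2 / (1 - (w s(i, p)) ^ 2) := by simp [hU]
      rw [hUii, Finset.sum_neg_distrib]
      ring
    · rw [Matrix.one_apply_ne hij]
      obtain ⟨k0, hk0, hSij, hother⟩ := hmain i j hij
      have hk0mem : k0 ∈ G.neighborFinset j := by
        rw [SimpleGraph.mem_neighborFinset]; exact hk0
      have hd0 : (1 : ℝ) - w s(j, k0) ^ 2 ≠ 0 := hne j k0 hk0
      rw [← Finset.add_sum_erase _ _ hk0mem]
      have e0 : S i k0 * U k0 j = -(S i j / (1 - (w s(j, k0)) ^ 2)) := by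
        have hUk0 : U k0 j = -(w s(j, k0)) / (1 - (w s(j, k0)) ^ 2) := by
          simp only [hU]
          rw [if_neg (G.ne_of_adj hk0).symm, if_pos hk0.symm, Sym2.eq_swap]
        rw [hUk0, hSij]
        field_simp
      have eo : ∀ k ∈ (G.neighborFinset j).erase k0, S i k * U k j
          = -(S i j * ((w s(j, k)) ^ 2 / (1 - (w s(j, k)) ^ 2))) := by
        intro k hk
        obtain ⟨hkne, hkmem⟩ := Finset.mem_erase.mp hk
        rw [SimpleGraph.mem_neighborFinset] at hkmem
        have hUkj : U k j = -(w s(j, k)) / (1 - (w s(j, k)) ^ 2) := by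
          simp only [hU]
          rw [if_neg (G.ne_of_adj hkmem).symm, if_pos hkmem.symm, Sym2.eq_swap]
        rw [hother k hkmem hkne, hUkj]
        ring
      rw [Finset.sum_congr rfl eo]
      have hUjj : U j j = 1 + ((w s(j, k0)) ^ 2 / (1 - (w s(j, k0)) ^ 2)
          + ∑ k ∈ (G.neighborFinset j).erase k0,
            (w s(j, k)) ^ 2 / (1 - (w s(j, k)) ^ 2)) := by
        simp only [hU, if_pos rfl]
        rw [← Finset.add_sum_erase _ _ hk0mem]
      rw [e0, hUjj, Finset.sum_neg_distrib, ← Finset.mul_sum]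
      have halg : ∀ c T : ℝ, c * (1 + ((w s(j, k0)) ^ 2 / (1 - (w s(j, k0)) ^ 2) + T))
          + (-(c / (1 - (w s(j, k0)) ^ 2)) + -(c * T)) = 0 := by
        intro c T
        field_simp
        ring
      exact halg (S i j) _
  have hdet : IsUnit S.det := Matrix.isUnit_det_of_right_inverse key
  have hinv : S⁻¹ = U := Matrix.inv_eq_right_inv key
  refine ⟨hdet, fun i j h => ?_, fun i j h1 h2 => ?_, fun i => ?_⟩
  · rw [hinv]; simp [hU, h, G.ne_of_adj h]
  · rw [hinv]; simp [hU, h1, h2]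
  · rw [hinv]; simp [hU]
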